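/- Let V be a Polish space, let K be a compact topological group acting continuously on V on the right, and let h : V → V be a continuous map commuting with the K-action (i.e., h(v · k) = h(v) · k for all v ∈ V, k ∈ K). Let (X, μ) be a probability space, T : X → X a measurable measure-preserving map, and ψ : X → V a Borel measurable function such that for μ-almost every x ∈ X, ψ(T x) lies in the K-orbit of h(ψ(x)), i.e., ψ(T x) ∈ { h(ψ(x)) · k : k ∈ K }. Then there exists a probability Borel measure ν on V that is h-invariant (the pushforward of ν under h equals ν) and whose support contains the support of the pushforward measure ψ_*μ (the essential range of ψ). -/

import Mathlib

open MeasureTheory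

/-- Let `V` be a Polish space with a continuous right action of a compact
group `K`, and `h : V → V` a continuous map commuting with the `K`-action. If `T` is a
measure-preserving map of a probability space `(X, μ)` and `ψ : X → V` is Borel with
`ψ(Tx)` in the `K`-orbit of `h(ψ(x))` for a.e. `x`, then there is an `h`-invariant Borel
probability measure `ν` on `V` whose support contains the support of `ψ_*μ`
(the essential range of `ψ`). Here the support of a measure is described as the set of
points all of whose open neighbourhoods have nonzero measure. -/
theorem exists_invariant_measure_supported_on_essential_range
    {V K X : Type*}
    [TopologicalSpace V] [PolishSpace V] [MeasurableSpace V] [BorelSpace V]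
    [Group K] [TopologicalSpace K] [IsTopologicalGroup K] [CompactSpace K]
    (act : V → K → V)
    (hact_cont : Continuous fun p : V × K => act p.1 p.2)
    (hact_one : ∀ v, act v 1 = v)
    (hact_mul : ∀ v k k', act (act v k) k' = act v (k * k'))
    (h : V → V) (hh_cont : Continuous h)
    (hcomm : ∀ v k, h (act v k) = act (h v) k)
    [MeasurableSpace X] (μ : Measure X) [IsProbabilityMeasure μ]
    (T : X → X) (hT : MeasurePreserving T μ μ)
    (ψ : X → V) (hψ : Measurable ψ)
    (horb : ∀ᵐ x ∂μ, ∃ k : K, ψ (T x) = act (h (ψ x)) k) :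
    ∃ ν : Measure V, IsProbabilityMeasure ν ∧ ν.map h = ν ∧
      {v : V | ∀ U : Set V, IsOpen U → v ∈ U → (μ.map ψ) U ≠ 0} ⊆
        {v : V | ∀ U : Set V, IsOpen U → v ∈ U → ν U ≠ 0} := by
  classical
  letI : MeasurableSpace K := borel K
  haveI : BorelSpace K := ⟨rfl⟩
  haveI : Nonempty K := ⟨1⟩
  set lam : Measure K := Measure.haarMeasure (⊤ : TopologicalSpace.PositiveCompacts K) with hlam
  haveI hlamprob : IsProbabilityMeasure lam := by
    constructor
    have : (Set.univ : Set K) = (↑(⊤ : TopologicalSpace.PositiveCompacts K) : Set K) :=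
      (TopologicalSpace.PositiveCompacts.coe_top (α := K)).symm
    rw [this]
    exact Measure.haarMeasure_self
  set m : Measure V := μ.map ψ with hm
  haveI : IsProbabilityMeasure m := Measure.isProbabilityMeasure_map hψ.aemeasurable
  have hact_meas : Measurable fun p : V × K => act p.1 p.2 := hact_cont.measurable
  set ν : Measure V := (m.prod lam).map (fun p : V × K => act p.1 p.2) with hν
  haveI : IsProbabilityMeasure ν := Measure.isProbabilityMeasure_map hact_meas.aemeasurable
  have hνapp : ∀ s : Set V, MeasurableSet s →
      ν s = ∫⁻ v, lam {k : K | act v k ∈ s} ∂m := by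
    intro s hs
    rw [hν, Measure.map_apply hact_meas hs, Measure.prod_apply (hact_meas hs)]
    rfl
  have hFmeas : ∀ s : Set V, MeasurableSet s →
      Measurable fun v => lam {k : K | act v k ∈ s} := by
    intro s hs
    exact measurable_measure_prodMk_left (hact_meas hs)
  -- key invariance of the fiber measure
  have hFinv : ∀ (s : Set V) (v : V) (k₀ : K),
      lam {k : K | act (act v k₀) k ∈ s} = lam {k : K | act v k ∈ s} := by
    intro s v k₀
    have : {k : K | act (act v k₀) k ∈ s} = (fun k => k₀ * k) ⁻¹' {k : K | act v k ∈ s} := by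
      ext k
      simp [hact_mul]
    rw [this, measure_preimage_mul]
  refine ⟨ν, inferInstance, ?_, ?_⟩
  · -- h-invariance
    ext s hs
    have hνh : ν.map h s = ∫⁻ v, lam {k : K | act (h v) k ∈ s} ∂m := by
      rw [Measure.map_apply hh_cont.measurable hs, hνapp _ (hh_cont.measurable hs)]
      congr 1
      ext v
      congr 1
      ext k
      simp [hcomm]
    rw [hνh, hνapp s hs]
    -- now show ∫ F(h v) dm = ∫ F v dm using the cocycle relation
    have hmT : μ.map (ψ ∘ T) = m := by
      rw [← Measure.map_map hψ hT.measurable, hT.map_eq]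
    have h1 : ∫⁻ v, lam {k : K | act v k ∈ s} ∂m
        = ∫⁻ x, lam {k : K | act (ψ (T x)) k ∈ s} ∂μ := by
      rw [← hmT, lintegral_map (hFmeas s hs) (hψ.comp hT.measurable)]
      rfl
    have h2 : ∫⁻ x, lam {k : K | act (ψ (T x)) k ∈ s} ∂μ
        = ∫⁻ x, lam {k : K | act (h (ψ x)) k ∈ s} ∂μ := by
      apply lintegral_congr_ae
      filter_upwards [horb] with x hx
      obtain ⟨k₀, hk₀⟩ := hx
      rw [hk₀, hFinv]
    have h3 : ∫⁻ x, lam {k : K | act (h (ψ x)) k ∈ s} ∂μ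
        = ∫⁻ v, lam {k : K | act (h v) k ∈ s} ∂m := by
      rw [hm]
      exact (lintegral_map ((hFmeas s hs).comp hh_cont.measurable) hψ).symm
    rw [← h3, ← h2, ← h1]
  · -- support inclusion
    intro v hv U hU hvU
    have hpre : IsOpen ((fun p : V × K => act p.1 p.2) ⁻¹' U) := hU.preimage hact_cont
    have hmem : (v, (1 : K)) ∈ (fun p : V × K => act p.1 p.2) ⁻¹' U := by
      simp [hact_one, hvU]
    obtain ⟨U', N, hU', hN, hvU', h1N, hsub⟩ := isOpen_prod_iff.mp hpre v 1 hmem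
    have hle : m U' * lam N ≤ ν U := by
      rw [hν, Measure.map_apply hact_meas hU.measurableSet, Measure.prod_apply
        (hact_meas hU.measurableSet)]
      calc m U' * lam N = (m.prod lam) (U' ×ˢ N) := (Measure.prod_prod U' N).symm
        _ ≤ (m.prod lam) ((fun p : V × K => act p.1 p.2) ⁻¹' U) := measure_mono hsub
        _ = _ := Measure.prod_apply (hact_meas hU.measurableSet)
    intro h0
    rw [h0] at hle
    have hmU' : m U' ≠ 0 := hv U' hU' hvU'
    have hlamN : lam N ≠ 0 := (hN.measure_ne_zero lam ⟨1, h1N⟩)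
    exact mul_ne_zero hmU' hlamN (le_antisymm hle (zero_le))
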